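/- arXiv:1706.00208 — 4 statements merged into one kernel-verified Lean document; each statement's English description precedes it below -/
import Mathlib

section
/- If R is a nonzero commutative Noetherian normal ring, then R is isomorphic as a ring to a finite product of normal domains; that is, there exist finitely many integral domains R_1, …, R_l, each integrally closed in its field of fractions, such that R ≅ R_1 × ⋯ × R_l. -/
open Ideal

universe u

section Aux

variable {R : Type*} [CommRing R]

lemma kerAux {p m : Ideal R} (hp : p ∈ minimalPrimes R) [m.IsPrime]
    [IsDomain (Localization.AtPrime m)] (hpm : p ≤ m) :
    RingHom.ker (algebraMap R (Localization.AtPrime m)) = p := by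
  have hker : (RingHom.ker (algebraMap R (Localization.AtPrime m))).IsPrime :=
    RingHom.ker_isPrime _
  have hle : RingHom.ker (algebraMap R (Localization.AtPrime m)) ≤ p := by
    intro x hx
    obtain ⟨⟨s, hs⟩, h⟩ := (IsLocalization.map_eq_zero_iff m.primeCompl _ x).mp hx
    have hsp : s ∉ p := fun h' => hs (hpm h')
    have := hp.1.1.mem_or_mem (show s * x ∈ p from h ▸ p.zero_mem)
    tauto
  exact le_antisymm hle (hp.2 ⟨hker, bot_le⟩ hle)

lemma comaxAux (hdom : ∀ (m : Ideal R) [m.IsPrime], IsDomain (Localization.AtPrime m))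
    {p q : Ideal R} (hp : p ∈ minimalPrimes R) (hq : q ∈ minimalPrimes R) (hne : p ≠ q) :
    p ⊔ q = ⊤ := by
  by_contra h
  obtain ⟨m, hm, hle⟩ := Ideal.exists_le_maximal _ h
  haveI := hm.isPrime
  haveI := hdom m
  exact hne ((kerAux hp (le_sup_left.trans hle)).symm.trans
    (kerAux hq (le_sup_right.trans hle)))

lemma icTransfer {A B : Type*} [CommRing A] [CommRing B] [IsDomain A] [IsIntegrallyClosed A]
    (e : A ≃+* B) : IsIntegrallyClosed B := by
  letI : Algebra B (FractionRing A) :=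
    ((algebraMap A (FractionRing A)).comp e.symm.toRingHom).toAlgebra
  have halg : ∀ b : B, algebraMap B (FractionRing A) b = algebraMap A _ (e.symm b) := fun _ => rfl
  have hnzd : ∀ y : B, y ∈ nonZeroDivisors B → e.symm y ∈ nonZeroDivisors A := by
    intro y hy; rw [mem_nonZeroDivisors_iff_right] at hy ⊢; intro z hz
    have : e z * y = 0 := by
      have := congrArg e hz
      rwa [_root_.map_mul, e.apply_symm_apply, map_zero] at this
    have := hy (e z) this
    simpa using congrArg e.symm this
  haveI : IsFractionRing B (FractionRing A) := by
    refine ⟨?_, ?_, ?_⟩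
    · rintro ⟨y, hy⟩
      exact halg y ▸ IsLocalization.map_units (M := nonZeroDivisors A) (FractionRing A)
        ⟨e.symm y, hnzd y hy⟩
    · intro z
      obtain ⟨⟨x, s⟩, h⟩ := IsLocalization.surj (nonZeroDivisors A) z
      refine ⟨⟨e x, ⟨e s.1, ?_⟩⟩, ?_⟩
      · rw [mem_nonZeroDivisors_iff_right]; intro w hw
        have : (e.symm w) * s.1 = 0 := by
          have := congrArg e.symm hw
          rwa [_root_.map_mul, e.symm_apply_apply, map_zero] at this
        have := mem_nonZeroDivisors_iff_right.mp s.2 _ this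
        simpa using congrArg e this
      · dsimp only
        rw [halg, halg, e.symm_apply_apply, e.symm_apply_apply]
        exact h
    · intro x y hxy
      rw [halg, halg] at hxy
      have hinj := IsFractionRing.injective A (FractionRing A) hxy
      exact ⟨1, by simpa using congrArg e hinj⟩
  refine (isIntegrallyClosed_iff (FractionRing A)).mpr ?_
  intro x hx
  obtain ⟨P, hPm, hPe⟩ := hx
  have hxA : IsIntegral A x :=
    ⟨P.map e.symm.toRingHom, hPm.map _, by rw [Polynomial.eval₂_map]; exact hPe⟩
  obtain ⟨y, hy⟩ := IsIntegrallyClosed.isIntegral_iff.mp hxA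
  exact ⟨e y, by rw [halg, e.symm_apply_apply, hy]⟩

lemma quotLocIC {p : Ideal R} (hp : p ∈ minimalPrimes R)
    (hnorm : ∀ (𝔭 : Ideal R) [𝔭.IsPrime],
      IsDomain (Localization.AtPrime 𝔭) ∧ IsIntegrallyClosed (Localization.AtPrime 𝔭)) :
    IsIntegrallyClosed (R ⧸ p) := by
  haveI : p.IsPrime := hp.1.1
  apply IsIntegrallyClosed.of_localization_maximal
  intro q hq0 hqm
  set π := Ideal.Quotient.mk p with hπ
  set m := q.comap π with hmdef
  haveI : m.IsMaximal := comap_isMaximal_of_surjective π Ideal.Quotient.mk_surjective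
  haveI := (inferInstance : m.IsMaximal).isPrime
  obtain ⟨hdm, hic⟩ := hnorm m
  set L := Localization.AtPrime m with hL
  have hpm : p ≤ m := by
    intro x hx
    show π x ∈ q
    rw [show π x = 0 from Ideal.Quotient.eq_zero_iff_mem.mpr hx]
    exact q.zero_mem
  have hker : RingHom.ker (algebraMap R L) = p := kerAux hp hpm
  let φ : R ⧸ p →+* L := Ideal.Quotient.lift p (algebraMap R L)
    (fun a ha => by rw [← RingHom.mem_ker, hker]; exact ha)
  letI : Algebra (R ⧸ p) L := φ.toAlgebra
  have hφπ : ∀ x : R, algebraMap (R ⧸ p) L (π x) = algebraMap R L x := fun x => rfl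
  haveI : IsLocalization q.primeCompl L := by
    refine ⟨?_, ?_, ?_⟩
    · rintro ⟨y, hy⟩
      obtain ⟨x, rfl⟩ := Ideal.Quotient.mk_surjective y
      exact hφπ x ▸ IsLocalization.map_units (M := m.primeCompl) L
        ⟨x, fun hx => hy (show π x ∈ q from hx)⟩
    · intro z
      obtain ⟨⟨x, s⟩, h⟩ := IsLocalization.surj m.primeCompl z
      refine ⟨⟨π x, ⟨π s.1, fun hs => s.2 (show s.1 ∈ m from hs)⟩⟩, ?_⟩
      dsimp only
      rw [hφπ, hφπ]
      exact h
    · intro a b hab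
      obtain ⟨x, rfl⟩ := Ideal.Quotient.mk_surjective a
      obtain ⟨y, rfl⟩ := Ideal.Quotient.mk_surjective b
      rw [hφπ, hφπ] at hab
      obtain ⟨c, hc⟩ := (IsLocalization.eq_iff_exists m.primeCompl L).mp hab
      exact ⟨⟨π c.1, fun h => c.2 (show c.1 ∈ m from h)⟩,
        by show π (↑c) * π x = π (↑c) * π y; rw [← _root_.map_mul, ← _root_.map_mul, hc]⟩
  exact icTransfer
    (IsLocalization.algEquiv q.primeCompl (Localization.AtPrime q) L).toRingEquiv.symm

end Aux

/-- A nonzero commutative Noetherian normal ring is isomorphic to a finite product of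
integrally closed integral domains. -/
theorem noetherian_normal_ring_is_finite_product_of_normal_domains
    {R : Type u} [CommRing R] [Nontrivial R] [IsNoetherianRing R]
    (hnorm : ∀ (𝔭 : Ideal R) [𝔭.IsPrime],
      IsDomain (Localization.AtPrime 𝔭) ∧ IsIntegrallyClosed (Localization.AtPrime 𝔭)) :
    ∃ (l : ℕ) (D : Fin l → Type u) (inst : ∀ i, CommRing (D i)),
      letI := inst
      (∀ i, IsDomain (D i) ∧ IsIntegrallyClosed (D i)) ∧
        Nonempty (R ≃+* ∀ i, D i) := by
  have hdom : ∀ (m : Ideal R) [m.IsPrime], IsDomain (Localization.AtPrime m) :=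
    fun m _ => (hnorm m).1
  haveI : IsReduced R := isReduced_ofLocalizationMaximal R fun J hJ => by
    haveI := hJ.isPrime
    haveI := hdom J
    infer_instance
  have hfin : (minimalPrimes R).Finite := minimalPrimes.finite_of_isNoetherianRing R
  haveI := hfin.fintype
  let e := Fintype.equivFin ↥(minimalPrimes R)
  set l := Fintype.card ↥(minimalPrimes R) with hl
  let I : Fin l → Ideal R := fun i => ((e.symm i : ↥(minimalPrimes R)) : Ideal R)
  have hImem : ∀ i, I i ∈ minimalPrimes R := fun i => (e.symm i).2
  haveI hIprime : ∀ i, (I i).IsPrime := fun i => (hImem i).1.1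
  refine ⟨l, fun i => R ⧸ I i, fun i => inferInstance, ?_, ?_⟩
  · intro i
    exact ⟨Ideal.Quotient.isDomain (I i), quotLocIC (hImem i) hnorm⟩
  · have hco : Pairwise (Function.onFun IsCoprime I) := by
      intro i j hij
      rw [Function.onFun, Ideal.isCoprime_iff_sup_eq]
      refine comaxAux hdom (hImem i) (hImem j) ?_
      intro h
      exact hij (e.symm.injective (Subtype.coe_injective h))
    have hinf : ⨅ i, I i = ⊥ := by
      have h1 : ⨅ i, I i = sInf (minimalPrimes R) := by
        rw [sInf_eq_iInf']
        exact Equiv.iInf_comp (g := fun a : ↥(minimalPrimes R) => (a : Ideal R)) e.symm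
      have h2 : sInf (minimalPrimes R) = (⊥ : Ideal R).radical :=
        Ideal.sInf_minimalPrimes
      have h3 : (⊥ : Ideal R).radical = ⊥ := by
        simpa [nilradical] using nilradical_eq_zero R
      rw [h1, h2, h3]
    exact ⟨((RingEquiv.quotientBot R).symm.trans (Ideal.quotEquivOfEq hinf.symm)).trans
      (Ideal.quotientInfRingEquivPiQuotient I hco)⟩
end

section
/- Let k be a field and let A be the localization of the formal power series ring k⟦x, y⟧ at the multiplicative set {1, y, y², …} of powers of y. Then the quotient A/(x − y) is isomorphic to the field of formal Laurent series k((x)); in particular, the ideal of A generated by x − y is a maximal ideal. -/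
open Finset MvPowerSeries

namespace LaurentAux

variable {k : Type*} [CommRing k]

/-- `(a, b) ↦` the finsupp `{0 ↦ a, 1 ↦ b}` on `Fin 2`. -/
noncomputable def fs (p : ℕ × ℕ) : Fin 2 →₀ ℕ :=
  Finsupp.single 0 p.1 + Finsupp.single 1 p.2

@[simp] lemma fs_apply_zero (p : ℕ × ℕ) : fs p 0 = p.1 := by
  simp [fs, Finsupp.single_apply]

@[simp] lemma fs_apply_one (p : ℕ × ℕ) : fs p 1 = p.2 := by
  simp [fs, Finsupp.single_apply]

lemma fs_self (s : Fin 2 →₀ ℕ) : fs (s 0, s 1) = s := by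
  ext i
  fin_cases i <;> simp

lemma fs_add (p q : ℕ × ℕ) : fs p + fs q = fs (p + q) := by
  ext i
  fin_cases i <;> simp

/-- The diagonal substitution `f(x, y) ↦ f(t, t)` as a bare function. -/
noncomputable def diagFun (f : MvPowerSeries (Fin 2) k) : PowerSeries k :=
  PowerSeries.mk fun n => ∑ p ∈ antidiagonal n, coeff (fs p) f

@[simp] lemma coeff_diagFun (f : MvPowerSeries (Fin 2) k) (n : ℕ) :
    PowerSeries.coeff n (diagFun f) = ∑ p ∈ antidiagonal n, coeff (fs p) f :=
  PowerSeries.coeff_mk _ _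

lemma diagFun_mul (f g : MvPowerSeries (Fin 2) k) :
    diagFun (f * g) = diagFun f * diagFun g := by
  classical
  ext n
  rw [PowerSeries.coeff_mul]
  simp only [coeff_diagFun, MvPowerSeries.coeff_mul, Finset.sum_mul_sum]
  rw [Finset.sum_sigma']
  simp only [← Finset.sum_product']
  rw [Finset.sum_sigma']
  refine Finset.sum_nbij'
    (fun x => ⟨(x.2.1 0 + x.2.1 1, x.2.2 0 + x.2.2 1), ((x.2.1 0, x.2.1 1), (x.2.2 0, x.2.2 1))⟩)
    (fun y => ⟨(y.2.1.1 + y.2.2.1, y.2.1.2 + y.2.2.2), (fs y.2.1, fs y.2.2)⟩)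
    ?_ ?_ ?_ ?_ ?_
  · rintro ⟨p, s, t⟩ hx
    simp only [Finset.mem_sigma, HasAntidiagonal.mem_antidiagonal, HasAntidiagonal.mem_antidiagonal] at hx
    obtain ⟨h1, h2⟩ := hx
    refine Finset.mem_sigma.2 ⟨HasAntidiagonal.mem_antidiagonal.2 ?_,
      Finset.mem_product.2 ⟨HasAntidiagonal.mem_antidiagonal.2 rfl, HasAntidiagonal.mem_antidiagonal.2 rfl⟩⟩
    have h0 : s 0 + t 0 = p.1 := by
      have := congrArg (fun u => u 0) h2; simpa using this
    have h1' : s 1 + t 1 = p.2 := by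
      have := congrArg (fun u => u 1) h2; simpa using this
    show s 0 + s 1 + (t 0 + t 1) = n
    omega
  · rintro ⟨ab, pq⟩ hy
    simp only [Finset.mem_sigma, HasAntidiagonal.mem_antidiagonal, Finset.mem_product] at hy
    obtain ⟨h1, h2, h3⟩ := hy
    dsimp only
    simp only [Finset.mem_sigma, HasAntidiagonal.mem_antidiagonal]
    constructor
    · omega
    · rw [fs_add]; rfl
  · rintro ⟨p, s, t⟩ hx
    simp only [Finset.mem_sigma, HasAntidiagonal.mem_antidiagonal, HasAntidiagonal.mem_antidiagonal] at hx
    obtain ⟨h1, h2⟩ := hx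
    have h0 : s 0 + t 0 = p.1 := by
      have := congrArg (fun u => u 0) h2; simpa using this
    have h1' : s 1 + t 1 = p.2 := by
      have := congrArg (fun u => u 1) h2; simpa using this
    dsimp only
    simp only [fs_self]
    congr 1
    · exact Prod.ext h0 h1'
  · rintro ⟨ab, pq⟩ hy
    simp only [Finset.mem_sigma, HasAntidiagonal.mem_antidiagonal, Finset.mem_product] at hy
    obtain ⟨h1, h2, h3⟩ := hy
    dsimp only
    simp only [fs_apply_zero, fs_apply_one]
    congr 1
    · exact Prod.ext h2 h3
  · rintro ⟨p, s, t⟩ hx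
    dsimp only
    simp [fs_self]

lemma diagFun_one : diagFun (1 : MvPowerSeries (Fin 2) k) = 1 := by
  classical
  ext n
  simp only [coeff_diagFun, MvPowerSeries.coeff_one, PowerSeries.coeff_one]
  rcases n with _ | n
  · rw [Finset.Nat.antidiagonal_zero, Finset.sum_singleton, if_pos, if_pos rfl]
    ext i; fin_cases i <;> simp
  · rw [Finset.sum_eq_zero, if_neg (Nat.succ_ne_zero n)]
    rintro ⟨a, b⟩ hp
    rw [HasAntidiagonal.mem_antidiagonal] at hp
    rw [if_neg]
    intro h
    have h0 := congrArg (fun u => u 0) h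
    have h1 := congrArg (fun u => u 1) h
    simp only [fs_apply_zero, fs_apply_one, Finsupp.coe_zero, Pi.zero_apply] at h0 h1
    omega

/-- The diagonal substitution `f(x, y) ↦ f(t, t)` as a ring homomorphism. -/
noncomputable def diag : MvPowerSeries (Fin 2) k →+* PowerSeries k where
  toFun := diagFun
  map_one' := diagFun_one
  map_mul' := diagFun_mul
  map_zero' := by ext n; simp
  map_add' f g := by ext n; simp [Finset.sum_add_distrib]

@[simp] lemma coeff_diag (f : MvPowerSeries (Fin 2) k) (n : ℕ) :
    PowerSeries.coeff n (diag f) = ∑ p ∈ antidiagonal n, coeff (fs p) f :=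
  coeff_diagFun f n

lemma diag_X (i : Fin 2) : diag (X i : MvPowerSeries (Fin 2) k) = PowerSeries.X := by
  classical
  ext n
  rw [PowerSeries.coeff_X]
  simp only [coeff_diag, MvPowerSeries.coeff_X]
  have key : ∀ p : ℕ × ℕ, fs p = Finsupp.single i 1 ↔ p = (if i = 0 then (1, 0) else (0, 1)) := by
    intro p
    constructor
    · intro h
      have h0 := congrArg (fun u => u 0) h
      have h1 := congrArg (fun u => u 1) h
      fin_cases i <;>
        simp only [fs_apply_zero, fs_apply_one, Finsupp.single_apply] at h0 h1 <;>
        · simp only [if_pos, if_neg, reduceIte] at h0 h1 ⊢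
          ext <;> simp_all
    · rintro rfl
      fin_cases i <;> (ext j; fin_cases j <;> simp [Finsupp.single_apply])
  rcases n with _ | _ | n
  · rw [Finset.sum_eq_zero, if_neg (by norm_num)]
    rintro ⟨a, b⟩ hp
    rw [HasAntidiagonal.mem_antidiagonal] at hp
    rw [if_neg]
    intro h
    rw [key] at h
    have hfst := congrArg Prod.fst h
    have hsnd := congrArg Prod.snd h
    fin_cases i <;> simp_all
  · rw [if_pos rfl, Finset.sum_eq_single (if i = 0 then (1, 0) else (0, 1))]
    · rw [if_pos ((key _).mpr rfl)]
    · rintro ⟨a, b⟩ hp hne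
      rw [HasAntidiagonal.mem_antidiagonal] at hp
      rw [if_neg fun h => hne ((key _).mp h)]
    · intro hmem
      exfalso
      apply hmem
      rw [HasAntidiagonal.mem_antidiagonal]
      fin_cases i <;> simp
  · rw [Finset.sum_eq_zero, if_neg (by omega)]
    rintro ⟨a, b⟩ hp
    rw [HasAntidiagonal.mem_antidiagonal] at hp
    rw [if_neg]
    intro h
    rw [key] at h
    have hfst := congrArg Prod.fst h
    have hsnd := congrArg Prod.snd h
    fin_cases i <;> simp_all

/-- A section of `diag`: a power series `h(t)` maps to `h(x)` (no `y`). -/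
noncomputable def sec (h : PowerSeries k) : MvPowerSeries (Fin 2) k :=
  fun s => if s 1 = 0 then PowerSeries.coeff (s 0) h else 0

lemma diag_sec (h : PowerSeries k) : diag (sec h) = h := by
  classical
  ext n
  rw [coeff_diag, Finset.sum_eq_single (n, 0)]
  · show (if _ then _ else _) = _
    rw [if_pos (fs_apply_one (n, 0)), fs_apply_zero]
  · rintro ⟨a, b⟩ hp hne
    rw [HasAntidiagonal.mem_antidiagonal] at hp
    show (if _ then _ else _) = _
    rw [fs_apply_one, fs_apply_zero]
    rw [if_neg]
    rintro rfl
    exact hne (by simp at hp ⊢; omega)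
  · intro hmem
    exact absurd (HasAntidiagonal.mem_antidiagonal.2 (by simp)) hmem

lemma coeff_X_mul' (i : Fin 2) (φ : MvPowerSeries (Fin 2) k) (m : Fin 2 →₀ ℕ) :
    coeff m (X i * φ) =
      if Finsupp.single i 1 ≤ m then coeff (m - Finsupp.single i 1) φ else 0 := by
  classical
  rw [show (X i : MvPowerSeries (Fin 2) k) = monomial (Finsupp.single i 1) 1 from rfl,
    coeff_monomial_mul]
  simp

lemma fs_sub_zero (a b : ℕ) : fs (a + 1, b) - Finsupp.single (0 : Fin 2) 1 = fs (a, b) := by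
  ext i
  fin_cases i <;> simp [Finsupp.tsub_apply, Finsupp.single_apply]

lemma fs_sub_one (a b : ℕ) : fs (a, b + 1) - Finsupp.single (1 : Fin 2) 1 = fs (a, b) := by
  ext i
  fin_cases i <;> simp [Finsupp.tsub_apply, Finsupp.single_apply]

lemma exists_of_diag_eq_zero {f : MvPowerSeries (Fin 2) k} (hf : diag f = 0) :
    ∃ h, f = (X 0 - X 1) * h := by
  classical
  have H : ∀ n : ℕ, ∑ i ∈ Finset.range (n + 1), coeff (fs (i, n - i)) f = 0 := by
    intro n
    have h1 := congrArg (PowerSeries.coeff n) hf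
    rw [coeff_diag, Finset.Nat.sum_antidiagonal_eq_sum_range_succ_mk] at h1
    simpa using h1
  refine ⟨(fun s => -(∑ i ∈ Finset.range (s 0 + 1),
      coeff (fs (i, s 0 + s 1 + 1 - i)) f) : (Fin 2 →₀ ℕ) → k), ?_⟩
  set hh : MvPowerSeries (Fin 2) k := (fun s => -(∑ i ∈ Finset.range (s 0 + 1),
      coeff (fs (i, s 0 + s 1 + 1 - i)) f) : (Fin 2 →₀ ℕ) → k) with hhdef
  have hcoeff : ∀ m : Fin 2 →₀ ℕ, coeff m hh =
      -(∑ i ∈ Finset.range (m 0 + 1), coeff (fs (i, m 0 + m 1 + 1 - i)) f) := fun m => rfl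
  ext s
  obtain ⟨a, b, rfl⟩ : ∃ a b, s = fs (a, b) := ⟨s 0, s 1, (fs_self s).symm⟩
  rw [sub_mul, map_sub, coeff_X_mul', coeff_X_mul']
  rcases a with _ | A <;> rcases b with _ | B
  · rw [if_neg, if_neg]
    · have h0 := H 0
      rw [Finset.sum_range_one] at h0
      simpa using h0
    · rw [Finsupp.single_le_iff]; simp
    · rw [Finsupp.single_le_iff]; simp
  · rw [if_neg, if_pos, fs_sub_one, hcoeff]
    · simp
    · rw [Finsupp.single_le_iff]; simp
    · rw [Finsupp.single_le_iff]; simp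
  · rw [if_pos, if_neg, fs_sub_zero, hcoeff]
    · simp only [fs_apply_zero, fs_apply_one]
      have h0 := H (A + 1)
      rw [Finset.sum_range_succ] at h0
      simp only [Nat.sub_self] at h0
      have harith : ∀ x : ℕ, A + 0 + 1 - x = A + 1 - x := fun x => by omega
      simp only [harith]
      linear_combination h0
    · rw [Finsupp.single_le_iff]; simp
    · rw [Finsupp.single_le_iff]; simp
  · rw [if_pos, if_pos, fs_sub_zero, fs_sub_one, hcoeff, hcoeff]
    · simp only [fs_apply_zero, fs_apply_one]
      have harith : ∀ x : ℕ, A + (B + 1) + 1 - x = A + 1 + B + 1 - x := fun x => by omega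
      simp only [harith]
      rw [Finset.sum_range_succ (fun x => coeff (fs (x, A + 1 + B + 1 - x)) f) (A + 1)]
      have h2 : A + 1 + B + 1 - (A + 1) = B + 1 := by omega
      rw [h2]
      ring
    · rw [Finsupp.single_le_iff]; simp
    · rw [Finsupp.single_le_iff]; simp

end LaurentAux

open LaurentAux

/-- Let `A` be the localization of `k⟦x, y⟧` away from `y`. Then `A/(x - y)` is isomorphic
to the field of formal Laurent series `k((x))`; in particular `(x - y)` is a maximal ideal
of `A`. -/
theorem quotient_of_localized_power_series_is_laurent_series (k : Type*) [Field k] :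
    Nonempty
      ((Localization.Away (X 1 : MvPowerSeries (Fin 2) k) ⧸
          Ideal.span {algebraMap (MvPowerSeries (Fin 2) k)
            (Localization.Away (X 1 : MvPowerSeries (Fin 2) k)) (X 0 - X 1)}) ≃+*
        LaurentSeries k) ∧
    (Ideal.span {algebraMap (MvPowerSeries (Fin 2) k)
        (Localization.Away (X 1 : MvPowerSeries (Fin 2) k)) (X 0 - X 1)}).IsMaximal := by
  classical
  set g : MvPowerSeries (Fin 2) k →+* LaurentSeries k :=
    (HahnSeries.ofPowerSeries ℤ k).comp LaurentAux.diag with hg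
  have hgapp : ∀ f, g f = HahnSeries.ofPowerSeries ℤ k (LaurentAux.diag f) := fun f => rfl
  have hgX : ∀ i : Fin 2, g (X i) = HahnSeries.ofPowerSeries ℤ k PowerSeries.X := by
    intro i
    rw [hgapp, LaurentAux.diag_X]
  have hXunit : IsUnit (g (X 1)) := by
    rw [hgX]
    refine isUnit_iff_ne_zero.mpr fun h => PowerSeries.X_ne_zero (R := k) ?_
    exact HahnSeries.ofPowerSeries_injective (h.trans (map_zero _).symm)
  set Φ : Localization.Away (X 1 : MvPowerSeries (Fin 2) k) →+* LaurentSeries k :=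
    IsLocalization.Away.lift (X 1) hXunit with hΦ
  have hΦalg : ∀ f, Φ (algebraMap (MvPowerSeries (Fin 2) k) _ f) = g f := fun f =>
    IsLocalization.Away.lift_eq (X 1) hXunit f
  -- surjectivity
  have hsurj : Function.Surjective Φ := by
    intro z
    obtain ⟨⟨p, u⟩, hu⟩ := IsLocalization.surj (Submonoid.powers (PowerSeries.X : PowerSeries k)) z
    obtain ⟨m, hm⟩ := u.2
    refine ⟨IsLocalization.mk' _ (LaurentAux.sec p)
      (⟨(X 1) ^ m, m, rfl⟩ : Submonoid.powers (X 1 : MvPowerSeries (Fin 2) k)), ?_⟩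
    have hXmne : (PowerSeries.X : PowerSeries k) ^ m ≠ 0 :=
      pow_ne_zero m PowerSeries.X_ne_zero
    have hC : (HahnSeries.ofPowerSeries ℤ k) (PowerSeries.X ^ m) ≠ 0 := fun h =>
      hXmne (HahnSeries.ofPowerSeries_injective (h.trans (map_zero _).symm))
    apply mul_right_cancel₀ hC
    have key : Φ (IsLocalization.mk' _ (LaurentAux.sec p)
        (⟨(X 1) ^ m, m, rfl⟩ : Submonoid.powers (X 1 : MvPowerSeries (Fin 2) k))) *
        Φ (algebraMap (MvPowerSeries (Fin 2) k) _ ((X 1) ^ m)) = g (LaurentAux.sec p) := by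
      rw [← map_mul, IsLocalization.mk'_spec, hΦalg]
    have hXm : Φ (algebraMap (MvPowerSeries (Fin 2) k) _ ((X 1) ^ m)) =
        (HahnSeries.ofPowerSeries ℤ k) (PowerSeries.X ^ m) := by
      rw [hΦalg, map_pow, hgX, ← map_pow]
    rw [← hXm, key, hgapp, LaurentAux.diag_sec, hXm]
    have hm' : (PowerSeries.X : PowerSeries k) ^ m = ↑u := hm
    dsimp only at hu
    rw [← hm'] at hu
    simp only [LaurentSeries.coe_algebraMap] at hu
    rw [hu]
  -- kernel
  have hker : RingHom.ker Φ =
      Ideal.span {algebraMap (MvPowerSeries (Fin 2) k)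
        (Localization.Away (X 1 : MvPowerSeries (Fin 2) k)) (X 0 - X 1)} := by
    apply le_antisymm
    · intro a ha
      rw [RingHom.mem_ker] at ha
      obtain ⟨⟨f, u⟩, hu⟩ := IsLocalization.surj (Submonoid.powers (X 1 : MvPowerSeries (Fin 2) k)) a
      have h1 : g f = 0 := by
        have h2 := congrArg Φ hu
        rw [map_mul, ha, zero_mul, hΦalg] at h2
        exact h2.symm
      have h2 : LaurentAux.diag f = 0 := by
        apply HahnSeries.ofPowerSeries_injective (Γ := ℤ)
        rw [← hgapp, h1, map_zero]
      obtain ⟨h, rfl⟩ := LaurentAux.exists_of_diag_eq_zero h2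
      have hmem : algebraMap (MvPowerSeries (Fin 2) k)
          (Localization.Away (X 1 : MvPowerSeries (Fin 2) k)) ((X 0 - X 1) * h) ∈
          Ideal.span {algebraMap (MvPowerSeries (Fin 2) k)
            (Localization.Away (X 1 : MvPowerSeries (Fin 2) k)) (X 0 - X 1)} := by
        rw [map_mul]
        exact Ideal.mul_mem_right _ _ (Ideal.subset_span rfl)
      obtain ⟨v, hv⟩ := IsLocalization.map_units
        (Localization.Away (X 1 : MvPowerSeries (Fin 2) k)) u
      have ha' : a = algebraMap (MvPowerSeries (Fin 2) k) _ ((X 0 - X 1) * h) * ↑v⁻¹ := by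
        rw [Units.eq_mul_inv_iff_mul_eq, hv, hu]
      rw [ha']
      exact Ideal.mul_mem_right _ _ hmem
    · rw [Ideal.span_le, Set.singleton_subset_iff, SetLike.mem_coe, RingHom.mem_ker, hΦalg,
        map_sub, hgX 0, hgX 1, sub_self]
  have e : (Localization.Away (X 1 : MvPowerSeries (Fin 2) k) ⧸
      Ideal.span {algebraMap (MvPowerSeries (Fin 2) k)
        (Localization.Away (X 1 : MvPowerSeries (Fin 2) k)) (X 0 - X 1)}) ≃+*
      LaurentSeries k :=
    (Ideal.quotEquivOfEq hker.symm).trans (RingHom.quotientKerEquivOfSurjective hsurj)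
  exact ⟨⟨e⟩, Ideal.Quotient.maximal_of_isField _
    (MulEquiv.isField (Field.toIsField (LaurentSeries k)) e.toMulEquiv)⟩
end

section
/- Let k be a field and let A be the localization of the formal power series ring k⟦x, y⟧ at the multiplicative set {1, y, y², …} of powers of y. Then the ideals of A generated by x and by x − y are two distinct maximal ideals of A; in particular, A is not a local ring. -/
open MvPowerSeries Finset Finsupp

namespace LPSNL
variable {k : Type*} [Field k]

noncomputable def m2 (a b : ℕ) : Fin 2 →₀ ℕ := Finsupp.single 0 a + Finsupp.single 1 b

/-- "evaluation at x = c y" of f, as a power series in y -/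
noncomputable def D (c : k) (f : MvPowerSeries (Fin 2) k) : MvPowerSeries (Fin 2) k :=
  fun d => if d 0 = 0 then ∑ i ∈ range (d 1 + 1), c ^ i * coeff (m2 i (d 1 - i)) f else 0

/-- explicit quotient of `f - D c f` by `x - c y` -/
noncomputable def Q (c : k) (f : MvPowerSeries (Fin 2) k) : MvPowerSeries (Fin 2) k :=
  fun d => ∑ j ∈ range (d 1 + 1), c ^ j * coeff (m2 (d 0 + 1 + j) (d 1 - j)) f

lemma m2_apply_zero (a b : ℕ) : m2 a b 0 = a := by simp [m2, Finsupp.single_apply]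
lemma m2_apply_one (a b : ℕ) : m2 a b 1 = b := by simp [m2, Finsupp.single_apply]

lemma eq_m2 (d : Fin 2 →₀ ℕ) : d = m2 (d 0) (d 1) := by
  ext i
  fin_cases i <;> simp [m2, Finsupp.single_apply]

lemma m2_sub_zero (a b : ℕ) : m2 a b - Finsupp.single 0 1 = m2 (a - 1) b := by
  ext i
  fin_cases i <;> simp [m2, Finsupp.single_apply]

lemma m2_sub_one (a b : ℕ) : m2 a b - Finsupp.single 1 1 = m2 a (b - 1) := by
  ext i
  fin_cases i <;> simp [m2, Finsupp.single_apply]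

lemma coeff_X0_mul (φ : MvPowerSeries (Fin 2) k) (a b : ℕ) :
    coeff (m2 a b) ((X 0 : MvPowerSeries (Fin 2) k) * φ) =
      if a = 0 then 0 else coeff (m2 (a - 1) b) φ := by
  rw [X_def, coeff_monomial_mul]
  rcases Nat.eq_zero_or_pos a with h | h
  · subst h
    rw [if_neg, if_pos rfl]
    rw [Finsupp.single_le_iff, m2_apply_zero]
    omega
  · rw [if_pos, if_neg (by omega), one_mul, m2_sub_zero]
    rw [Finsupp.single_le_iff, m2_apply_zero]
    omega

lemma coeff_X1_mul (φ : MvPowerSeries (Fin 2) k) (a b : ℕ) :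
    coeff (m2 a b) ((X 1 : MvPowerSeries (Fin 2) k) * φ) =
      if b = 0 then 0 else coeff (m2 a (b - 1)) φ := by
  rw [X_def, coeff_monomial_mul]
  rcases Nat.eq_zero_or_pos b with h | h
  · subst h
    rw [if_neg, if_pos rfl]
    rw [Finsupp.single_le_iff, m2_apply_one]
    omega
  · rw [if_pos, if_neg (by omega), one_mul, m2_sub_one]
    rw [Finsupp.single_le_iff, m2_apply_one]
    omega

lemma coeff_D (c : k) (f : MvPowerSeries (Fin 2) k) (a b : ℕ) :
    coeff (m2 a b) (D c f) =
      if a = 0 then ∑ i ∈ range (b + 1), c ^ i * coeff (m2 i (b - i)) f else 0 := by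
  show (if (m2 a b) 0 = 0 then _ else _) = _
  rw [m2_apply_zero, m2_apply_one]

lemma coeff_Q (c : k) (f : MvPowerSeries (Fin 2) k) (a b : ℕ) :
    coeff (m2 a b) (Q c f) =
      ∑ j ∈ range (b + 1), c ^ j * coeff (m2 (a + 1 + j) (b - j)) f := by
  show (∑ j ∈ range ((m2 a b) 1 + 1), c ^ j * coeff (m2 ((m2 a b) 0 + 1 + j) ((m2 a b) 1 - j)) f) = _
  rw [m2_apply_zero, m2_apply_one]

lemma coeff_t_mul (c : k) (g : MvPowerSeries (Fin 2) k) (a b : ℕ) :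
    coeff (m2 a b) ((X 0 - C c * X 1) * g) =
      (if a = 0 then 0 else coeff (m2 (a - 1) b) g) -
        c * (if b = 0 then 0 else coeff (m2 a (b - 1)) g) := by
  rw [sub_mul, map_sub, mul_assoc, coeff_C_mul, coeff_X0_mul, coeff_X1_mul]

/-- key division identity: `(x - c y) * Q c f = f - D c f` -/
lemma key_div (c : k) (f : MvPowerSeries (Fin 2) k) :
    (X 0 - C c * X 1) * Q c f = f - D c f := by
  ext d
  rw [eq_m2 d]
  generalize d 0 = a; generalize d 1 = b
  rw [coeff_t_mul, map_sub, coeff_D]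
  rcases Nat.eq_zero_or_pos a with ha | ha
  · subst ha
    rw [if_pos rfl, if_pos rfl,
      Finset.sum_range_succ' (fun i => c ^ i * coeff (m2 i (b - i)) f) b]
    rcases Nat.eq_zero_or_pos b with hb | hb
    · subst hb
      simp
    · obtain ⟨s, rfl⟩ : ∃ s, b = s + 1 := ⟨b - 1, by omega⟩
      rw [if_neg (by omega), Nat.add_sub_cancel, coeff_Q, Finset.mul_sum]
      have hsum : ∑ j ∈ range (s + 1), c * (c ^ j * coeff (m2 (0 + 1 + j) (s - j)) f)
          = ∑ j ∈ range (s + 1), c ^ (j + 1) * coeff (m2 (j + 1) (s + 1 - (j + 1))) f := by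
        refine Finset.sum_congr rfl fun j hj => ?_
        rw [show (0 : ℕ) + 1 + j = j + 1 by omega, show s - j = s + 1 - (j + 1) by omega]
        ring
      rw [hsum]
      simp only [pow_zero, one_mul, Nat.sub_zero]
      ring
  · obtain ⟨a', rfl⟩ : ∃ a', a = a' + 1 := ⟨a - 1, by omega⟩
    rw [if_neg (Nat.succ_ne_zero a'), if_neg (Nat.succ_ne_zero a'), Nat.add_sub_cancel, sub_zero,
      coeff_Q, Finset.sum_range_succ' (fun j => c ^ j * coeff (m2 (a' + 1 + j) (b - j)) f) b]
    rcases Nat.eq_zero_or_pos b with hb | hb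
    · subst hb
      simp
    · obtain ⟨s, rfl⟩ : ∃ s, b = s + 1 := ⟨b - 1, by omega⟩
      rw [if_neg (by omega), Nat.add_sub_cancel, coeff_Q, Finset.mul_sum]
      have hsum : ∑ j ∈ range (s + 1), c * (c ^ j * coeff (m2 (a' + 1 + 1 + j) (s - j)) f)
          = ∑ j ∈ range (s + 1), c ^ (j + 1) * coeff (m2 (a' + 1 + (j + 1)) (s + 1 - (j + 1))) f := by
        refine Finset.sum_congr rfl fun j hj => ?_
        rw [show a' + 1 + 1 + j = a' + 1 + (j + 1) by omega, show s - j = s + 1 - (j + 1) by omega]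
        ring
      rw [hsum]
      simp only [pow_zero, one_mul, Nat.sub_zero, Nat.add_zero]
      ring

/-- evaluation kills multiples of `x - c y` -/
lemma D_t_mul (c : k) (g : MvPowerSeries (Fin 2) k) :
    D c ((X 0 - C c * X 1) * g) = 0 := by
  ext d
  rw [eq_m2 d]
  generalize d 0 = a; generalize d 1 = n
  rw [coeff_D, map_zero]
  rcases Nat.eq_zero_or_pos a with ha | ha
  · subst ha
    rw [if_pos rfl]
    have expand : ∀ i, c ^ i * coeff (m2 i (n - i)) ((X 0 - C c * X 1) * g)
        = (c ^ i * (if i = 0 then 0 else coeff (m2 (i - 1) (n - i)) g))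
          - (c ^ (i + 1) * (if n - i = 0 then 0 else coeff (m2 i (n - i - 1)) g)) := by
      intro i
      rw [coeff_t_mul]
      ring
    have h1 : ∑ i ∈ range (n + 1), c ^ i * coeff (m2 i (n - i)) ((X 0 - C c * X 1) * g)
        = ∑ i ∈ range (n + 1),
            ((c ^ i * (if i = 0 then 0 else coeff (m2 (i - 1) (n - i)) g))
              - (c ^ (i + 1) * (if n - i = 0 then 0 else coeff (m2 i (n - i - 1)) g))) :=
      Finset.sum_congr rfl fun i _ => expand i
    rw [h1, Finset.sum_sub_distrib,
      Finset.sum_range_succ'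
        (fun i => c ^ i * (if i = 0 then 0 else coeff (m2 (i - 1) (n - i)) g)) n,
      Finset.sum_range_succ
        (fun i => c ^ (i + 1) * (if n - i = 0 then 0 else coeff (m2 i (n - i - 1)) g)) n]
    simp only [Nat.sub_self, if_true, if_pos, mul_zero, add_zero, Nat.succ_ne_zero, if_false,
      eq_self_iff_true]
    rw [sub_eq_zero]
    refine Finset.sum_congr rfl fun i hi => ?_
    rw [Finset.mem_range] at hi
    rw [if_neg (show ¬ (n - i = 0) by omega), show n - (i + 1) = n - i - 1 by omega, Nat.add_sub_cancel]
  · rw [if_neg (by omega)]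


lemma m2_zero_left (b : ℕ) : m2 0 b = Finsupp.single 1 b := by
  rw [m2, Finsupp.single_zero, zero_add]

lemma exists_unit_decomp (c : k) (f : MvPowerSeries (Fin 2) k) (hD : D c f ≠ 0) :
    ∃ (n : ℕ) (u : MvPowerSeries (Fin 2) k), IsUnit u ∧ D c f = X 1 ^ n * u := by
  classical
  have hex : ∃ n, coeff (m2 0 n) (D c f) ≠ 0 := by
    by_contra h
    push_neg at h
    apply hD
    ext d
    obtain ⟨a, b, rfl⟩ : ∃ a b, d = m2 a b := ⟨d 0, d 1, eq_m2 d⟩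
    rw [MvPowerSeries.coeff_zero, coeff_D]
    rcases eq_or_ne a 0 with h0 | h0
    · rw [if_pos h0]
      have := h b
      rw [coeff_D, if_pos rfl] at this
      exact this
    · rw [if_neg h0]
  set n := Nat.find hex with hn
  have hdvd : (X 1 : MvPowerSeries (Fin 2) k) ^ n ∣ D c f := by
    rw [X_pow_dvd_iff]
    intro d hd
    obtain ⟨a, b, rfl⟩ : ∃ a b, d = m2 a b := ⟨d 0, d 1, eq_m2 d⟩
    rw [m2_apply_one] at hd
    rcases eq_or_ne a 0 with h0 | h0
    · subst h0
      have := Nat.find_min hex hd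
      push_neg at this
      exact this
    · rw [coeff_D, if_neg h0]
  obtain ⟨u, hu⟩ := hdvd
  have hconst : coeff (m2 0 n) (D c f) = constantCoeff u := by
    rw [hu, m2_zero_left, X_pow_eq, coeff_monomial_mul, if_pos le_rfl, tsub_self, one_mul,
      ← coeff_zero_eq_constantCoeff_apply]
  refine ⟨n, u, ?_, hu⟩
  rw [isUnit_iff_constantCoeff, isUnit_iff_ne_zero, ← hconst]
  exact Nat.find_spec hex

lemma coeff_X1_pow (a b n : ℕ) :
    coeff (m2 a b) ((X 1 : MvPowerSeries (Fin 2) k) ^ n) = if a = 0 ∧ b = n then 1 else 0 := by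
  rw [X_pow_eq, coeff_monomial]
  congr 1
  · rw [eq_iff_iff]
    constructor
    · intro h
      constructor
      · have := congrFun (congrArg (fun g : Fin 2 →₀ ℕ => (g : Fin 2 → ℕ)) h) 0
        simpa [m2_apply_zero, Finsupp.single_apply] using this
      · have := congrFun (congrArg (fun g : Fin 2 →₀ ℕ => (g : Fin 2 → ℕ)) h) 1
        simpa [m2_apply_one, Finsupp.single_apply] using this
    · rintro ⟨rfl, rfl⟩
      rw [m2_zero_left]

/-- `y ^ n` is not a multiple of `x - c y` -/
lemma X1_pow_not_dvd (c : k) (n : ℕ) (g : MvPowerSeries (Fin 2) k) :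
    (X 1 : MvPowerSeries (Fin 2) k) ^ n ≠ (X 0 - C c * X 1) * g := by
  intro h
  have h0 : D c ((X 0 - C c * X 1) * g) = 0 := D_t_mul c g
  rw [← h] at h0
  have h1 : coeff (m2 0 n) (D c ((X 1 : MvPowerSeries (Fin 2) k) ^ n)) = 1 := by
    rw [coeff_D, if_pos rfl, Finset.sum_range_succ'
      (fun i => c ^ i * coeff (m2 i (n - i)) ((X 1 : MvPowerSeries (Fin 2) k) ^ n)) n]
    rw [Finset.sum_eq_zero, zero_add]
    · rw [pow_zero, one_mul, Nat.sub_zero, coeff_X1_pow, if_pos ⟨rfl, rfl⟩]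
    · intro i _
      rw [coeff_X1_pow, if_neg (by omega), mul_zero]
  rw [h0, map_zero] at h1
  exact zero_ne_one h1


lemma X1_ne_zero : (X 1 : MvPowerSeries (Fin 2) k) ≠ 0 := by
  intro h
  have := congrArg (coeff (Finsupp.single 1 1)) h
  rw [coeff_index_single_self_X, MvPowerSeries.coeff_zero] at this
  exact one_ne_zero this

lemma span_isMaximal (c : k) :
    (Ideal.span {algebraMap (MvPowerSeries (Fin 2) k)
      (Localization.Away (X 1 : MvPowerSeries (Fin 2) k))
      (X 0 - C c * X 1)}).IsMaximal := by
  classical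
  set R := MvPowerSeries (Fin 2) k with hR
  set A := Localization.Away (X 1 : R) with hA
  set t : R := X 0 - C c * X 1 with ht
  set φ : R →+* A := algebraMap R A with hφ
  have hinj : Function.Injective φ :=
    IsLocalization.injective A (powers_le_nonZeroDivisors_of_noZeroDivisors (X1_ne_zero (k := k)))
  have hXunit : IsUnit (φ (X 1)) :=
    IsLocalization.map_units A ⟨X 1, Submonoid.mem_powers _⟩
  have h1 : (1 : A) ∉ Ideal.span {φ t} := by
    intro hmem
    rw [Ideal.mem_span_singleton] at hmem
    obtain ⟨z, hz⟩ := hmem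
    obtain ⟨⟨p, s⟩, hp⟩ := IsLocalization.surj (M := Submonoid.powers (X 1 : R)) (S := A) z
    obtain ⟨m, hm⟩ := s.2
    have hm' : (X 1 : R) ^ m = s.1 := hm
    have heq : φ ((X 1 : R) ^ m) = φ (t * p) := by
      rw [map_mul, hm']
      calc φ s.1 = 1 * φ s.1 := (one_mul _).symm
        _ = φ t * z * φ s.1 := by rw [← hz]
        _ = φ t * φ p := by rw [mul_assoc, hp]
    exact X1_pow_not_dvd c m p (hinj heq)
  rw [Ideal.isMaximal_iff]
  refine ⟨h1, fun J z hIJ hzI hzJ => ?_⟩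
  obtain ⟨⟨p, s⟩, hp⟩ := IsLocalization.surj (M := Submonoid.powers (X 1 : R)) (S := A) z
  have hsunit : IsUnit (φ s.1) := IsLocalization.map_units A s
  obtain ⟨v, hv⟩ := hsunit
  have hφp : φ p ∈ J := by
    rw [← hp]
    exact J.mul_mem_right _ hzJ
  have hkey := key_div c p
  rw [← ht] at hkey
  by_cases hD : D c p = 0
  · exfalso
    apply hzI
    rw [Ideal.mem_span_singleton]
    have hg : p = t * Q c p := by
      rw [hkey, hD, sub_zero]
    refine ⟨φ (Q c p) * ↑v⁻¹, ?_⟩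
    have h2 : z * ↑v = φ p := by rw [hv]; exact hp
    calc z = z * ↑v * ↑v⁻¹ := by rw [mul_assoc]; simp
      _ = φ p * ↑v⁻¹ := by rw [h2]
      _ = φ t * (φ (Q c p) * ↑v⁻¹) := by conv_lhs => rw [hg, map_mul, mul_assoc]
  · obtain ⟨n, u, huu, huDecomp⟩ := exists_unit_decomp c p hD
    have htJ : φ t ∈ J := hIJ (Ideal.subset_span (Set.mem_singleton _))
    have hpu : φ ((X 1 : R) ^ n * u) ∈ J := by
      have hrw : (X 1 : R) ^ n * u = p - t * Q c p := by
        rw [hkey, huDecomp, sub_sub_cancel]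
      rw [hrw, map_sub, map_mul]
      exact J.sub_mem hφp (J.mul_mem_right _ htJ)
    have hunit : IsUnit (φ ((X 1 : R) ^ n * u)) := by
      rw [map_mul, map_pow]
      exact (hXunit.pow n).mul (huu.map φ)
    rw [Ideal.eq_top_of_isUnit_mem J hpu hunit]
    exact Submodule.mem_top


lemma span_X1_sub (c : k) (h : Ideal.span {algebraMap (MvPowerSeries (Fin 2) k)
      (Localization.Away (X 1 : MvPowerSeries (Fin 2) k)) (X 0)} =
      Ideal.span {algebraMap (MvPowerSeries (Fin 2) k)
      (Localization.Away (X 1 : MvPowerSeries (Fin 2) k)) (X 0 - X 1)}) : False := by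
  set R := MvPowerSeries (Fin 2) k
  set A := Localization.Away (X 1 : R)
  set φ : R →+* A := algebraMap R A with hφ
  have hXunit : IsUnit (φ (X 1)) :=
    IsLocalization.map_units A ⟨X 1, Submonoid.mem_powers _⟩
  have hmem : φ (X 1) ∈ Ideal.span {φ (X 0)} := by
    have h1 : φ (X 0) ∈ Ideal.span {φ (X 0)} := Ideal.subset_span (Set.mem_singleton _)
    have h2 : φ (X 0 - X 1) ∈ Ideal.span {φ (X 0)} := by
      rw [h]
      exact Ideal.subset_span (Set.mem_singleton _)
    have h3 := Ideal.sub_mem _ h1 h2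
    rwa [← map_sub, sub_sub_cancel] at h3
  have htop : Ideal.span {φ (X 0)} = ⊤ := Ideal.eq_top_of_isUnit_mem _ hmem hXunit
  have hmax : (Ideal.span {φ (X 0)}).IsMaximal := by
    have e0 : (X 0 : R) - C (0 : k) * X 1 = X 0 := by
      rw [map_zero, zero_mul, sub_zero]
    have := span_isMaximal (0 : k)
    rwa [e0] at this
  exact hmax.ne_top htop

end LPSNL

open LPSNL in
/-- In the localization `A` of `k⟦x, y⟧` away from `y`, the ideals generated by `x` and by
`x - y` are two distinct maximal ideals; in particular `A` is not a local ring. -/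
theorem localized_power_series_not_local (k : Type*) [Field k] :
    (Ideal.span {algebraMap (MvPowerSeries (Fin 2) k)
        (Localization.Away (X 1 : MvPowerSeries (Fin 2) k)) (X 0)}).IsMaximal ∧
    (Ideal.span {algebraMap (MvPowerSeries (Fin 2) k)
        (Localization.Away (X 1 : MvPowerSeries (Fin 2) k)) (X 0 - X 1)}).IsMaximal ∧
    Ideal.span {algebraMap (MvPowerSeries (Fin 2) k)
        (Localization.Away (X 1 : MvPowerSeries (Fin 2) k)) (X 0)} ≠
      Ideal.span {algebraMap (MvPowerSeries (Fin 2) k)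
        (Localization.Away (X 1 : MvPowerSeries (Fin 2) k)) (X 0 - X 1)} ∧
    ¬ IsLocalRing (Localization.Away (X 1 : MvPowerSeries (Fin 2) k)) := by
  have e0 : (X 0 : MvPowerSeries (Fin 2) k) - C (0 : k) * X 1 = X 0 := by
    rw [map_zero, zero_mul, sub_zero]
  have e1 : (X 0 : MvPowerSeries (Fin 2) k) - C (1 : k) * X 1 = X 0 - X 1 := by
    rw [map_one, one_mul]
  have M0 : (Ideal.span {algebraMap (MvPowerSeries (Fin 2) k)
      (Localization.Away (X 1 : MvPowerSeries (Fin 2) k)) (X 0)}).IsMaximal := by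
    have := span_isMaximal (0 : k)
    rwa [e0] at this
  have M1 : (Ideal.span {algebraMap (MvPowerSeries (Fin 2) k)
      (Localization.Away (X 1 : MvPowerSeries (Fin 2) k)) (X 0 - X 1)}).IsMaximal := by
    have := span_isMaximal (1 : k)
    rwa [e1] at this
  have hne : Ideal.span {algebraMap (MvPowerSeries (Fin 2) k)
        (Localization.Away (X 1 : MvPowerSeries (Fin 2) k)) (X 0)} ≠
      Ideal.span {algebraMap (MvPowerSeries (Fin 2) k)
        (Localization.Away (X 1 : MvPowerSeries (Fin 2) k)) (X 0 - X 1)} :=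
    fun h => span_X1_sub (0 : k) h
  refine ⟨M0, M1, hne, fun hL => hne ?_⟩
  rw [IsLocalRing.eq_maximalIdeal M0, IsLocalRing.eq_maximalIdeal M1]
end

section
/- Let A be a commutative Noetherian normal ring and let 𝔭 ⊂ A be a prime ideal such that the canonical map from A to its 𝔭-adic completion A^∧_𝔭 = lim_n A/𝔭ⁿ is an isomorphism. Then A is an integral domain. -/
/-- If `A` is a commutative Noetherian normal ring and `𝔭` is a prime ideal such that the
canonical map from `A` to its `𝔭`-adic completion is an isomorphism, then `A` is an
integral domain. -/
theorem complete_noetherian_normal_is_domain {A : Type*} [CommRing A] [IsNoetherianRing A]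
    (hnorm : ∀ (𝔮 : Ideal A) [𝔮.IsPrime],
      IsDomain (Localization.AtPrime 𝔮) ∧ IsIntegrallyClosed (Localization.AtPrime 𝔮))
    (𝔭 : Ideal A) [𝔭.IsPrime]
    (hcompl : Function.Bijective (algebraMap A (AdicCompletion 𝔭 A))) :
    IsDomain A := by
  have hp𝔭 : 𝔭.IsPrime := inferInstance
  have hA : Nontrivial A := by
    rcases subsingleton_or_nontrivial A with h | h
    · exact absurd (Subsingleton.elim 𝔭 ⊤) hp𝔭.ne_top
    · exact h
  -- elements of all powers of 𝔭 are zero, by injectivity of the completion map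
  have hker : ∀ x : A, (∀ n : ℕ, x ∈ 𝔭 ^ n) → x = 0 := by
    intro x hx
    apply hcompl.injective
    rw [map_zero]
    refine Subtype.ext (funext fun n => ?_)
    have hsm : (𝔭 ^ n • ⊤ : Ideal A) = 𝔭 ^ n := by
      rw [Ideal.smul_eq_mul, Ideal.mul_top]
    show (Ideal.Quotient.mk (𝔭 ^ n • ⊤ : Ideal A) x) = 0
    refine Ideal.Quotient.eq_zero_iff_mem.mpr ?_
    rw [hsm]
    exact hx n
  -- idempotents are trivial
  have hidem : ∀ e : A, e * e = e → e = 0 ∨ e = 1 := by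
    intro e he
    have h0 : e * (1 - e) = 0 := by rw [mul_sub, he, mul_one, sub_self]
    rcases hp𝔭.mem_or_mem (h0 ▸ 𝔭.zero_mem) with h | h
    · left
      refine hker e fun n => ?_
      have hpow : e ^ n.succ = e := by
        induction n with
        | zero => simpa using he
        | succ k ih => rw [pow_succ, ih, he]
      have hm : e ∈ 𝔭 ^ (n + 1) := hpow ▸ Ideal.pow_mem_pow h (n + 1)
      exact Ideal.pow_le_pow_right (Nat.le_succ n) hm
    · right
      have h1 : (1 - e) * (1 - e) = 1 - e := by
        have : (1 - e) * (1 - e) = 1 - e - (e - e * e) := by ring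
        rw [this, he, sub_self, sub_zero]
      have : (1 - e) = 0 := by
        refine hker (1 - e) fun n => ?_
        have hpow : (1 - e) ^ n.succ = 1 - e := by
          induction n with
          | zero => simpa using h1
          | succ k ih => rw [pow_succ, ih, h1]
        have hm : 1 - e ∈ 𝔭 ^ (n + 1) := hpow ▸ Ideal.pow_mem_pow h (n + 1)
        exact Ideal.pow_le_pow_right (Nat.le_succ n) hm
      linear_combination -this
  -- A is reduced
  have hred : IsReduced A := by
    refine isReduced_ofLocalizationMaximal A fun J hJ => ?_
    have : J.IsPrime := hJ.isPrime
    have := (hnorm J).1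
    infer_instance
  -- any two minimal primes contained in a common prime are equal
  have huniq : ∀ (m : Ideal A), m.IsPrime → ∀ p ∈ minimalPrimes A, ∀ q ∈ minimalPrimes A,
      p ≤ m → q ≤ m → p = q := by
    intro m hm p hp q hq hpm hqm
    have hdom := (hnorm m).1
    set f := algebraMap A (Localization.AtPrime m) with hf
    have hbot : (⊥ : Ideal (Localization.AtPrime m)).IsPrime := Ideal.bot_prime
    have hk : (Ideal.comap f ⊥).IsPrime := Ideal.IsPrime.comap f
    have key : ∀ r ∈ minimalPrimes A, r ≤ m → r = Ideal.comap f ⊥ := by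
      intro r hr hrm
      have h1 : Ideal.comap f ⊥ ≤ r := by
        intro x hx
        have hx0 : f x = 0 := Ideal.mem_bot.mp hx
        obtain ⟨s, hs⟩ := (IsLocalization.map_eq_zero_iff m.primeCompl
          (Localization.AtPrime m) x).mp hx0
        have hsx : (s : A) * x ∈ r := by rw [hs]; exact r.zero_mem
        rcases hr.1.1.mem_or_mem hsx with h | h
        · exact absurd (hrm h) s.2
        · exact h
      exact le_antisymm (hr.2 ⟨hk, bot_le⟩ h1) h1
    rw [key p hp hpm, key q hq hqm]
  -- there is a unique minimal prime
  obtain ⟨p, hp, -⟩ := Ideal.exists_minimalPrimes_le (bot_le : (⊥ : Ideal A) ≤ 𝔭)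
  have hone : minimalPrimes A = {p} := by
    refine Set.eq_singleton_iff_unique_mem.mpr ⟨hp, ?_⟩
    intro q hq
    by_contra hne
    set S : Set (Ideal A) := minimalPrimes A \ {p} with hS
    have hqS : q ∈ S := ⟨hq, hne⟩
    have hfin : S.Finite := (minimalPrimes.finite_of_isNoetherianRing A).diff
    have htop : p ⊔ sInf S = ⊤ := by
      by_contra hne'
      obtain ⟨m, hmmax, hm⟩ := Ideal.exists_le_maximal _ hne'
      have hpm : p ≤ m := le_trans le_sup_left hm
      have hSm : sInf S ≤ m := le_trans le_sup_right hm
      rw [← hfin.coe_toFinset, ← Finset.inf_id_eq_sInf] at hSm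
      have hmp : m.IsPrime := hmmax.isPrime
      obtain ⟨r, hrS, hrm⟩ := (Ideal.IsPrime.inf_le' hmp).mp hSm
      rw [hfin.mem_toFinset] at hrS
      exact hrS.2 (huniq m hmp r hrS.1 p hp hrm hpm)
    obtain ⟨x, hxp, y, hyS, hxy⟩ := Submodule.mem_sup.mp
      (htop ▸ Submodule.mem_top : (1 : A) ∈ p ⊔ sInf S)
    have hxy0 : x * y = 0 := by
      have h1 : x * y ∈ sInf (minimalPrimes A) := by
        rw [Submodule.mem_sInf]
        intro r hr
        by_cases hrp : r = p
        · subst hrp; exact Ideal.mul_mem_right y r hxp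
        · have hrS : r ∈ S := ⟨hr, fun hh => hrp (Set.mem_singleton_iff.mp hh)⟩
          exact Ideal.mul_mem_left r x (sInf_le hrS hyS)
      have h2 : sInf (minimalPrimes A) = ⊥ := by
        rw [show minimalPrimes A = (⊥ : Ideal A).minimalPrimes from rfl,
          Ideal.sInf_minimalPrimes]
        rw [show Ideal.radical (⊥ : Ideal A) = nilradical A from rfl, nilradical_eq_zero]
        rfl
      rw [h2] at h1
      exact Ideal.mem_bot.mp h1
    have hxid : x * x = x := by
      have : x * x = x * (x + y) - x * y := by ring
      rw [hxy, hxy0] at this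
      simpa using this
    rcases hidem x hxid with h | h
    · have hy1 : y = 1 := by rw [h, zero_add] at hxy; exact hxy
      have : (1 : A) ∈ q := hy1 ▸ (sInf_le hqS) hyS
      exact hq.1.1.ne_top (Ideal.eq_top_iff_one q |>.mpr this)
    · have : (1 : A) ∈ p := h ▸ hxp
      exact hp.1.1.ne_top (Ideal.eq_top_iff_one p |>.mpr this)
  -- the zero ideal is prime
  have hbotp : (⊥ : Ideal A).IsPrime := by
    have h0 : (⊥ : Ideal A) = p := by
      have := Ideal.sInf_minimalPrimes (I := (⊥ : Ideal A))
      rw [show (⊥ : Ideal A).minimalPrimes = minimalPrimes A from rfl, hone,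
        sInf_singleton] at this
      rw [show Ideal.radical (⊥ : Ideal A) = nilradical A from rfl, nilradical_eq_zero] at this
      exact this.symm
    rw [h0]; exact hp.1.1
  have : NoZeroDivisors A := ⟨fun {a b} hab => by
    rcases hbotp.mem_or_mem (show a * b ∈ (⊥ : Ideal A) from Ideal.mem_bot.mpr hab) with h | h
    · exact Or.inl (Ideal.mem_bot.mp h)
    · exact Or.inr (Ideal.mem_bot.mp h)⟩
  exact NoZeroDivisors.to_isDomain A
end
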